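/- For the complete bipartite graph K_{m,n} with m ≥ n ≥ 2, the independent domination stability equals 1. -/

import Mathlib

open SimpleGraph

/-- `S` is an independent dominating set of `G`. -/
def SimpleGraph.IsIndepDomSet {V : Type*} (G : SimpleGraph V) (S : Set V) : Prop :=
  (S.Pairwise fun u v => ¬ G.Adj u v) ∧ ∀ v ∉ S, ∃ u ∈ S, G.Adj v u

/-- The independent domination number `γᵢ(G)`. -/
noncomputable def indepDomNum (V : Type*) [Fintype V] (G : SimpleGraph V) : ℕ :=
  sInf {n | ∃ S : Finset V, G.IsIndepDomSet ↑S ∧ S.card = n}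

/-- The independent domination stability `st_id(G)`: the minimum number of
vertices whose removal changes the independent domination number. -/
noncomputable def idStability (V : Type*) [Fintype V] [DecidableEq V]
    (G : SimpleGraph V) : ℕ :=
  sInf {k | ∃ A : Finset V, A.card = k ∧ A.Nonempty ∧
    indepDomNum _ (G.induce (↑(Aᶜ) : Set V)) ≠ indepDomNum V G}

lemma ids_set_eq {V : Type*} [Fintype V] [DecidableEq V] (G : SimpleGraph V)
    (L : Finset V) (hL : L.Nonempty) (hLc : Lᶜ.Nonempty)
    (hadj : ∀ u v, G.Adj u v ↔ (u ∈ L ∧ v ∉ L) ∨ (u ∉ L ∧ v ∈ L)) :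
    {k | ∃ S : Finset V, G.IsIndepDomSet ↑S ∧ S.card = k} = {L.card, Lᶜ.card} := by
  ext k
  constructor
  · rintro ⟨S, ⟨hind, hdom⟩, rfl⟩
    by_cases h : ∃ u ∈ S, u ∈ L
    · left
      congr 1
      apply Finset.Subset.antisymm
      · intro v hv
        obtain ⟨u, hu, huL⟩ := h
        by_contra hvL
        have hne : u ≠ v := fun e => hvL (e ▸ huL)
        exact hind hu hv hne ((hadj u v).2 (Or.inl ⟨huL, hvL⟩))
      · intro v hv
        by_contra hvS
        obtain ⟨w, hwS, hvw⟩ := hdom v hvS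
        rcases (hadj v w).1 hvw with ⟨_, hwL⟩ | ⟨hvL, _⟩
        · obtain ⟨u, hu, huL⟩ := h
          have hne : u ≠ w := fun e => hwL (e ▸ huL)
          exact absurd ((hadj u w).2 (Or.inl ⟨huL, hwL⟩)) (hind hu hwS hne)
        · exact hvL hv
    · right
      push_neg at h
      congr 1
      apply Finset.Subset.antisymm
      · intro v hv
        exact Finset.mem_compl.2 (h v hv)
      · intro v hv
        rw [Finset.mem_compl] at hv
        by_contra hvS
        obtain ⟨w, hwS, hvw⟩ := hdom v hvS
        rcases (hadj v w).1 hvw with ⟨hvL, _⟩ | ⟨_, hwL⟩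
        · exact hv hvL
        · exact h w hwS hwL
  · rintro (rfl | rfl)
    · refine ⟨L, ⟨?_, ?_⟩, rfl⟩
      · intro u hu v hv _ hadj'
        rcases (hadj u v).1 hadj' with ⟨_, hvL⟩ | ⟨huL, _⟩
        · exact hvL hv
        · exact huL hu
      · intro v hv
        obtain ⟨u, hu⟩ := hL
        exact ⟨u, hu, (hadj v u).2 (Or.inr ⟨hv, hu⟩)⟩
    · refine ⟨Lᶜ, ⟨?_, ?_⟩, rfl⟩
      · intro u hu v hv _ hadj'
        simp only [Finset.coe_compl, Set.mem_compl_iff, Finset.mem_coe] at hu hv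
        rcases (hadj u v).1 hadj' with ⟨huL, _⟩ | ⟨_, hvL⟩
        · exact hu huL
        · exact hv hvL
      · intro v hv
        simp only [Finset.coe_compl, Set.mem_compl_iff, Finset.mem_coe, not_not] at hv
        obtain ⟨u, hu⟩ := hLc
        exact ⟨u, by simpa using hu, (hadj v u).2 (Or.inl ⟨hv, Finset.mem_compl.1 hu⟩)⟩

lemma indepDomNum_eq {V : Type*} [Fintype V] [DecidableEq V] (G : SimpleGraph V)
    (L : Finset V) (hL : L.Nonempty) (hLc : Lᶜ.Nonempty)
    (hadj : ∀ u v, G.Adj u v ↔ (u ∈ L ∧ v ∉ L) ∨ (u ∉ L ∧ v ∈ L)) :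
    indepDomNum V G = min L.card Lᶜ.card := by
  rw [indepDomNum, ids_set_eq G L hL hLc hadj, csInf_pair]

lemma filter_subtype_card {V : Type*} [DecidableEq V] [Fintype V] (T : Finset V)
    (p : V → Prop) [DecidablePred p] :
    (Finset.univ.filter (fun v : (↑T : Set V) => p ↑v)).card = (T.filter p).card := by
  refine Finset.card_bij (fun v _ => (v : V)) ?_ ?_ ?_
  · rintro ⟨a, ha⟩ hmem
    simp only [Finset.mem_filter, Finset.mem_univ, true_and] at hmem
    exact Finset.mem_filter.2 ⟨by simpa using ha, hmem⟩
  · rintro ⟨a, _⟩ _ ⟨b, _⟩ _ h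
    exact Subtype.ext h
  · intro b hb
    rw [Finset.mem_filter] at hb
    exact ⟨⟨b, by simpa using hb.1⟩, by simpa using hb.2, rfl⟩

lemma filterLeft_card (m n : ℕ) :
    (Finset.univ.filter (fun x : Fin m ⊕ Fin n => x.isLeft)).card = m := by
  have : Finset.univ.filter (fun x : Fin m ⊕ Fin n => x.isLeft)
      = Finset.univ.map ⟨Sum.inl, Sum.inl_injective⟩ := by
    ext x
    cases x <;> simp
  rw [this, Finset.card_map, Finset.card_univ, Fintype.card_fin]

lemma gamK (m n : ℕ) (hm : 0 < m) (hn : 0 < n) :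
    indepDomNum _ (completeBipartiteGraph (Fin m) (Fin n)) = min m n := by
  have hLcard := filterLeft_card m n
  have hLccard : (Finset.univ.filter (fun x : Fin m ⊕ Fin n => x.isLeft))ᶜ.card = n := by
    rw [Finset.card_compl, hLcard]
    simp
  rw [indepDomNum_eq _ (Finset.univ.filter (fun x : Fin m ⊕ Fin n => x.isLeft))
      (Finset.card_pos.1 (by omega)) (Finset.card_pos.1 (by omega))
      (by rintro (u | u) (v | v) <;> simp), hLcard, hLccard]

lemma gamK' (m n : ℕ) (hm : 0 < m) (hn : 2 ≤ n) (i : Fin n) :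
    indepDomNum _ ((completeBipartiteGraph (Fin m) (Fin n)).induce
      (↑(({Sum.inr i} : Finset (Fin m ⊕ Fin n))ᶜ) : Set (Fin m ⊕ Fin n)))
      = min m (n - 1) := by
  set T : Finset (Fin m ⊕ Fin n) := {Sum.inr i}ᶜ with hT
  have hL'card : (Finset.univ.filter
      (fun v : (↑T : Set (Fin m ⊕ Fin n)) => Sum.isLeft (v : Fin m ⊕ Fin n))).card = m := by
    refine (filter_subtype_card T (fun x : Fin m ⊕ Fin n => (x.isLeft : Prop))).trans ?_
    have : T.filter (fun x : Fin m ⊕ Fin n => x.isLeft)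
        = Finset.univ.filter (fun x : Fin m ⊕ Fin n => x.isLeft) := by
      ext x
      cases x <;> simp [hT]
    rw [this, filterLeft_card]
  have hTcard : T.card = m + n - 1 := by
    rw [hT, Finset.card_compl, Finset.card_singleton]
    simp
  have hcardV' : Fintype.card (↑T : Set (Fin m ⊕ Fin n)) = m + n - 1 := by
    simpa using hTcard
  have hL'ccard : (Finset.univ.filter
      (fun v : (↑T : Set (Fin m ⊕ Fin n)) => Sum.isLeft (v : Fin m ⊕ Fin n)))ᶜ.card = n - 1 := by
    rw [Finset.card_compl, hL'card, hcardV']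
    omega
  rw [indepDomNum_eq _ (Finset.univ.filter
      (fun v : (↑T : Set (Fin m ⊕ Fin n)) => Sum.isLeft (v : Fin m ⊕ Fin n)))
      (Finset.card_pos.1 (by omega)) (Finset.card_pos.1 (by omega))
      (by rintro ⟨u | u, hu⟩ ⟨v | v, hv⟩ <;> simp [SimpleGraph.induce]), hL'card, hL'ccard]

/-- For the complete bipartite graph `K_{m,n}` with `m ≥ n ≥ 2`,
the independent domination stability equals 1. -/
theorem stmt1 (m n : ℕ) (hn : 2 ≤ n) (hmn : n ≤ m) :
    idStability _ (completeBipartiteGraph (Fin m) (Fin n)) = 1 := by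
  have hm : 0 < m := by omega
  have hn0 : 0 < n := by omega
  have hgam := gamK m n hm hn0
  have hgam' := gamK' m n hm hn ⟨0, hn0⟩
  have h1 : 1 ∈ {k | ∃ A : Finset (Fin m ⊕ Fin n), A.card = k ∧ A.Nonempty ∧
      indepDomNum _ ((completeBipartiteGraph (Fin m) (Fin n)).induce (↑(Aᶜ) : Set (Fin m ⊕ Fin n)))
        ≠ indepDomNum _ (completeBipartiteGraph (Fin m) (Fin n))} := by
    refine ⟨{Sum.inr ⟨0, hn0⟩}, by simp, ⟨Sum.inr ⟨0, hn0⟩, Finset.mem_singleton_self _⟩, ?_⟩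
    rw [hgam, hgam', min_eq_right hmn, min_eq_right (by omega : n - 1 ≤ m)]
    omega
  rw [idStability]
  apply le_antisymm (Nat.sInf_le h1)
  rw [Nat.one_le_iff_ne_zero]
  intro h0
  rcases Nat.sInf_eq_zero.1 h0 with hmem | hempty
  · obtain ⟨B, hB0, hBne, _⟩ := hmem
    exact absurd (Finset.card_pos.2 hBne) (by omega)
  · rw [hempty] at h1
    exact h1
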